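/- Let 𝓑 be a homothecy invariant density basis of bounded open convex sets in ℝⁿ, and assume (as guaranteed by the Busemann–Feller theorem) that for every λ ∈ (0,1) there exists a finite constant c(λ) such that |{x ∈ ℝⁿ : M_𝓑 χ_E(x) > λ}| ≤ c(λ)|E| for all measurable sets E of finite measure. Then for every measurable set E ⊆ ℝⁿ, |{x ∈ ℝⁿ : M_𝓑 χ_E(x) = 1}| = |E|. -/

import Mathlib

open MeasureTheory Set Filter
open scoped ENNReal

/-- The geometric maximal operator associated to a collection `B` of sets. -/
noncomputable def MB {n : ℕ} (B : Set (Set (EuclideanSpace ℝ (Fin n))))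
    (f : EuclideanSpace ℝ (Fin n) → ℝ≥0∞) (x : EuclideanSpace ℝ (Fin n)) : ℝ≥0∞ :=
  ⨆ (R ∈ B) (_ : x ∈ R), (∫⁻ y in R, f y) / volume R

/-- `B` is a density basis: every point lies in sets of `B` of arbitrarily
small diameter, and averages of indicators over shrinking sets of `B`
converge a.e. to the indicator. -/
def IsDensityBasis {n : ℕ} (B : Set (Set (EuclideanSpace ℝ (Fin n)))) : Prop :=
  (∀ x : EuclideanSpace ℝ (Fin n), ∀ ε : ℝ, 0 < ε →
    ∃ R ∈ B, x ∈ R ∧ Metric.diam R < ε) ∧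
  ∀ E : Set (EuclideanSpace ℝ (Fin n)), MeasurableSet E → volume E < ⊤ →
    ∀ᵐ x : EuclideanSpace ℝ (Fin n) ∂volume,
      ∀ R : ℕ → Set (EuclideanSpace ℝ (Fin n)),
        (∀ k, R k ∈ B) → (∀ k, x ∈ R k) →
        Filter.Tendsto (fun k => Metric.diam (R k)) Filter.atTop (nhds 0) →
        Filter.Tendsto (fun k => (∫⁻ y in R k, E.indicator 1 y) / volume (R k))
          Filter.atTop (nhds (E.indicator (1 : EuclideanSpace ℝ (Fin n) → ℝ≥0∞) x))

namespace MaximalLevelOneAux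

variable {n : ℕ} {B : Set (Set (EuclideanSpace ℝ (Fin n)))}

local notation "V" => EuclideanSpace ℝ (Fin n)

lemma lint_ind {S : Set V} (hS : MeasurableSet S) (T : Set V) :
    (∫⁻ y in T, S.indicator 1 y) = volume (S ∩ T) := by
  rw [lintegral_indicator_one hS, Measure.restrict_apply hS]

lemma le_MB {f : V → ℝ≥0∞} {x : V} {R : Set V} (hRB : R ∈ B) (hx : x ∈ R) :
    (∫⁻ y in R, f y) / volume R ≤ MB B f x :=
  le_iSup_of_le R (le_iSup_of_le hRB (le_iSup_of_le hx le_rfl))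

lemma MB_le_one {E : Set V} (x : V) : MB B (E.indicator 1) x ≤ 1 := by
  refine iSup_le fun R => iSup_le fun _ => iSup_le fun _ => ?_
  refine ENNReal.div_le_of_le_mul ?_
  rw [one_mul]
  calc (∫⁻ y in R, E.indicator 1 y) ≤ ∫⁻ _ in R, (1 : ℝ≥0∞) := by
        refine lintegral_mono fun y => ?_
        exact Set.indicator_apply_le' (fun _ => le_rfl) (fun _ => zero_le)
    _ = volume R := setLIntegral_one R

/-- the image of `R` under the homothety `y ↦ a + t • y` coincides with
`AffineMap.homothety c t '' R` for `a = c - t • c`. -/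
lemma homothety_image_eq (c : V) (t : ℝ) (s : Set V) :
    (fun y : V => (c - t • c) + t • y) '' s = AffineMap.homothety c t '' s := by
  refine Set.image_congr fun y _ => ?_
  rw [AffineMap.homothety_apply]
  simp only [vsub_eq_sub, vadd_eq_add, smul_sub]
  abel

lemma volume_hom_image (c : V) {t : ℝ} (s : Set V) :
    volume ((fun y : V => (c - t • c) + t • y) '' s)
      = ENNReal.ofReal (|t| ^ n) * volume s := by
  rw [homothety_image_eq, Measure.addHaar_image_homothety, finrank_euclideanSpace_fin, abs_pow]

/-- From the density property at a point `x ∉ E`, small basis sets containing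
`x` have `E`-average less than `1/2`. -/
lemma exists_r0 {E : Set V} {x : V} (hxE : x ∉ E)
    (hx : ∀ R : ℕ → Set V, (∀ k, R k ∈ B) → (∀ k, x ∈ R k) →
        Tendsto (fun k => Metric.diam (R k)) atTop (nhds 0) →
        Tendsto (fun k => (∫⁻ y in R k, E.indicator 1 y) / volume (R k)) atTop
          (nhds (E.indicator (1 : V → ℝ≥0∞) x)))
    (hd1 : ∀ x : V, ∀ ε : ℝ, 0 < ε → ∃ R ∈ B, x ∈ R ∧ Metric.diam R < ε) :
    ∃ r₀ > (0:ℝ), ∀ Q ∈ B, x ∈ Q → Metric.diam Q < r₀ →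
      (∫⁻ y in Q, E.indicator 1 y) / volume Q < ENNReal.ofReal (1/2) := by
  by_contra hcon
  push_neg at hcon
  have hch : ∀ k : ℕ, ∃ Q, Q ∈ B ∧ x ∈ Q ∧ Metric.diam Q < 1/(k+1) ∧
      ENNReal.ofReal (1/2) ≤ (∫⁻ y in Q, E.indicator 1 y) / volume Q := by
    intro k
    obtain ⟨Q, hQB, hxQ, hQd, hQa⟩ := hcon (1/(k+1)) (by positivity)
    exact ⟨Q, hQB, hxQ, hQd, hQa⟩
  choose Q hQB hxQ hQd hQa using hch
  have hdiam : Tendsto (fun k => Metric.diam (Q k)) atTop (nhds 0) :=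
    squeeze_zero (fun k => Metric.diam_nonneg) (fun k => (hQd k).le)
      tendsto_one_div_add_atTop_nhds_zero_nat
  have ht := hx Q hQB hxQ hdiam
  rw [Set.indicator_of_notMem hxE] at ht
  have hev : ∀ᶠ k in atTop,
      (∫⁻ y in Q k, E.indicator 1 y) / volume (Q k) < ENNReal.ofReal (1/2) :=
    ht.eventually (Iio_mem_nhds (by simp [ENNReal.ofReal_pos]))
  obtain ⟨k, hk⟩ := hev.exists
  exact absurd (hQa k) (not_le.2 hk)

set_option maxHeartbeats 1000000 in
/-- Key pointwise lemma: at a point of the level-one set outside `E` where the small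
averages are below 1/2, the maximal function of any tail `E \ ball 0 M` exceeds `8⁻ⁿ/4`. -/
lemma mem_far_halo
    (hB : ∀ R ∈ B, IsOpen R ∧ Bornology.IsBounded R ∧ Convex ℝ R)
    (hhom : ∀ R ∈ B, ∀ (a : V) (t : ℝ), 0 < t → (fun x => a + t • x) '' R ∈ B)
    {E : Set V} (hE : MeasurableSet E)
    {x : V} (hxE : x ∉ E) (hx1 : MB B (E.indicator 1) x = 1)
    {r₀ : ℝ} (hr₀ : 0 < r₀)
    (hP1 : ∀ Q ∈ B, x ∈ Q → Metric.diam Q < r₀ →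
      (∫⁻ y in Q, E.indicator 1 y) / volume Q < ENNReal.ofReal (1/2))
    {M : ℝ} (hM : 0 ≤ M) :
    ENNReal.ofReal ((8:ℝ)⁻¹ ^ n / 4)
      < MB B ((E \ Metric.ball 0 M).indicator 1) x := by
  classical
  set a : ℝ := (8:ℝ)⁻¹ ^ n with ha
  have ha0 : 0 < a := by positivity
  have ha1 : a ≤ 1 := pow_le_one₀ (by norm_num) (by norm_num)
  set K : ℝ := M + ‖x‖ + 1 with hK
  have hK0 : 0 < K := by positivity
  set t₀ : ℝ := min (1/2) (3 * r₀ / (32 * K)) with ht₀def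
  have ht₀0 : 0 < t₀ := lt_min (by norm_num) (by positivity)
  have ht₀1 : t₀ ≤ 1/2 := min_le_left _ _
  have hKt : K ≤ 3 / 32 * (r₀ / t₀) := by
    have h2 : t₀ ≤ 3 * r₀ / (32 * K) := min_le_right _ _
    have h3 : t₀ * (32 * K) ≤ 3 * r₀ := by
      rw [← le_div_iff₀ (by positivity : (0:ℝ) < 32 * K)]
      exact h2
    rw [show (3:ℝ) / 32 * (r₀ / t₀) = (3 * r₀) / (32 * t₀) by ring,
      le_div_iff₀ (by positivity : (0:ℝ) < 32 * t₀)]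
    nlinarith
  set η : ℝ := min (t₀ ^ n / 2) (a / 2) with hηdef
  have htn0 : 0 < t₀ ^ n := by positivity
  have hη0 : 0 < η := lt_min (by positivity) (by positivity)
  have hηt : η ≤ t₀ ^ n / 2 := min_le_left _ _
  have hηa : η ≤ a / 2 := min_le_right _ _
  have hη1 : η < 1 := lt_of_le_of_lt hηa (by nlinarith)
  -- get a witness with average > 1 - η
  have hlt : ENNReal.ofReal (1 - η) < MB B (E.indicator 1) x := by
    rw [hx1]
    exact ENNReal.ofReal_lt_one.2 (by linarith)
  rw [MB] at hlt
  simp only [lt_iSup_iff] at hlt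
  obtain ⟨R, hRB, hxR, hRavg⟩ := hlt
  obtain ⟨hRo, hRb, hRc⟩ := hB R hRB
  have hV0 : volume R ≠ 0 := (hRo.measure_pos volume ⟨x, hxR⟩).ne'
  have hVt : volume R ≠ ⊤ := hRb.measure_lt_top.ne
  rw [lint_ind hE] at hRavg
  have hRavg' : ENNReal.ofReal (1 - η) * volume R < volume (E ∩ R) :=
    (ENNReal.lt_div_iff_mul_lt (Or.inl hV0) (Or.inl hVt)).1 hRavg
  -- the bad part of R is small
  have hVB : volume (R \ E) ≤ ENNReal.ofReal η * volume R := by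
    by_contra hcontra
    push_neg at hcontra
    have hsum := measure_inter_add_diff (μ := volume) R hE
    have h1 : ENNReal.ofReal (1 - η) * volume R + ENNReal.ofReal η * volume R
        < volume (R ∩ E) + volume (R \ E) := by
      refine ENNReal.add_lt_add ?_ hcontra
      rwa [Set.inter_comm]
    rw [hsum, ← add_mul, ← ENNReal.ofReal_add (by linarith) hη0.le, sub_add_cancel,
      ENNReal.ofReal_one, one_mul] at h1
    exact lt_irrefl _ h1
  -- the contracted set
  set R' : Set V := (fun y : V => (x - t₀ • x) + t₀ • y) '' R with hR'def
  have hR'B : R' ∈ B := hhom R hRB (x - t₀ • x) t₀ ht₀0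
  have hxR' : x ∈ R' := ⟨x, hxR, by dsimp only; exact sub_add_cancel x (t₀ • x)⟩
  have hR'sub : R' ⊆ R := by
    rintro z ⟨y, hy, rfl⟩
    have h : (1 - t₀) • x + t₀ • y ∈ R :=
      hRc hxR hy (by linarith : (0:ℝ) ≤ 1 - t₀) ht₀0.le (by ring)
    have heq : (1 - t₀) • x + t₀ • y = (x - t₀ • x) + t₀ • y := by
      rw [sub_smul, one_smul]
    rwa [heq] at h
  have hV' : volume R' = ENNReal.ofReal (t₀ ^ n) * volume R := by
    rw [volume_hom_image, abs_of_pos ht₀0]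
  have hV'0 : volume R' ≠ 0 := by
    rw [hV']
    refine mul_ne_zero ?_ hV0
    simp only [ne_eq, ENNReal.ofReal_eq_zero, not_le]
    positivity
  have hV't : volume R' ≠ ⊤ :=
    (hB R' hR'B).2.1.measure_lt_top.ne
  -- lower bound for the average over R'
  have hEV' : ENNReal.ofReal (t₀ ^ n / 2) * volume R ≤ volume (E ∩ R') := by
    have h2 : volume R' = volume (R' ∩ E) + volume (R' \ E) :=
      (measure_inter_add_diff (μ := volume) R' hE).symm
    have h3 : volume (R' \ E) ≤ ENNReal.ofReal (t₀ ^ n / 2) * volume R := by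
      refine le_trans (le_trans (measure_mono (Set.diff_subset_diff_left hR'sub)) hVB) ?_
      exact mul_le_mul_left (ENNReal.ofReal_le_ofReal hηt) _
    have h4 : ENNReal.ofReal (t₀ ^ n / 2) * volume R
        + ENNReal.ofReal (t₀ ^ n / 2) * volume R
        ≤ volume (R' ∩ E) + ENNReal.ofReal (t₀ ^ n / 2) * volume R := by
      calc ENNReal.ofReal (t₀ ^ n / 2) * volume R + ENNReal.ofReal (t₀ ^ n / 2) * volume R
          = ENNReal.ofReal (t₀ ^ n) * volume R := by
            rw [← add_mul, ← ENNReal.ofReal_add (by positivity) (by positivity)]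
            norm_num
        _ = volume R' := hV'.symm
        _ = volume (R' ∩ E) + volume (R' \ E) := h2
        _ ≤ volume (R' ∩ E) + ENNReal.ofReal (t₀ ^ n / 2) * volume R :=
            add_le_add_right h3 _
    have h5 := (ENNReal.add_le_add_iff_right
      (ENNReal.mul_ne_top ENNReal.ofReal_ne_top hVt)).1 h4
    rwa [Set.inter_comm] at h5
  have havg' : ENNReal.ofReal (1/2)
      ≤ (∫⁻ y in R', E.indicator 1 y) / volume R' := by
    rw [lint_ind hE]
    rw [ENNReal.le_div_iff_mul_le (Or.inl hV'0) (Or.inl hV't)]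
    calc ENNReal.ofReal (1/2) * volume R'
        = ENNReal.ofReal (1/2) * (ENNReal.ofReal (t₀ ^ n) * volume R) := by rw [hV']
      _ = ENNReal.ofReal (t₀ ^ n / 2) * volume R := by
          rw [← mul_assoc, ← ENNReal.ofReal_mul (by norm_num)]
          ring_nf
      _ ≤ volume (E ∩ R') := hEV'
  -- (P1) forces the contracted set (hence R) to be large
  have hdiam' : r₀ ≤ Metric.diam R' :=
    le_of_not_gt fun hlt' => absurd (hP1 R' hR'B hxR' hlt') (not_lt.2 havg')
  have hdle : Metric.diam R' ≤ t₀ * Metric.diam R := by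
    refine Metric.diam_le_of_forall_dist_le (by positivity) ?_
    rintro z ⟨u, hu, rfl⟩ w ⟨v, hv, rfl⟩
    have : ((x - t₀ • x) + t₀ • u) - ((x - t₀ • x) + t₀ • v) = t₀ • (u - v) := by
      rw [smul_sub]; abel
    rw [dist_eq_norm, this, norm_smul, Real.norm_eq_abs, abs_of_pos ht₀0]
    exact mul_le_mul_of_nonneg_left
      (by rw [← dist_eq_norm]; exact Metric.dist_le_diam_of_mem hRb hu hv) ht₀0.le
  set d : ℝ := Metric.diam R with hddef
  have hd0 : r₀ / t₀ ≤ d := by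
    rw [div_le_iff₀ ht₀0]
    calc r₀ ≤ Metric.diam R' := hdiam'
      _ ≤ t₀ * d := hdle
      _ = d * t₀ := mul_comm _ _
  have hdpos : 0 < d := lt_of_lt_of_le (by positivity) hd0
  -- a far point of R
  have hpair : ∃ y ∈ R, ∃ z ∈ R, d/2 < dist y z := by
    by_contra hcon
    push_neg at hcon
    have := Metric.diam_le_of_forall_dist_le (by positivity) hcon
    rw [← hddef] at this
    linarith
  obtain ⟨y, hy, z, hz, hyz⟩ := hpair
  have hfar : ∃ p ∈ R, d/4 ≤ dist p x := by
    by_contra hcon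
    push_neg at hcon
    have h1 := hcon y hy
    have h2 := hcon z hz
    have h3 := dist_triangle y x z
    rw [dist_comm x z] at h3
    linarith
  obtain ⟨p, hpR, hpx⟩ := hfar
  -- the contracted copy of R at p
  set P : Set V := (fun y : V => (p - (8:ℝ)⁻¹ • p) + (8:ℝ)⁻¹ • y) '' R with hPdef
  have hPsub : P ⊆ R := by
    rintro w ⟨u, hu, rfl⟩
    have h : (1 - (8:ℝ)⁻¹) • p + (8:ℝ)⁻¹ • u ∈ R :=
      hRc hpR hu (by norm_num : (0:ℝ) ≤ 1 - (8:ℝ)⁻¹) (by norm_num) (by ring)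
    have heq : (1 - (8:ℝ)⁻¹) • p + (8:ℝ)⁻¹ • u = (p - (8:ℝ)⁻¹ • p) + (8:ℝ)⁻¹ • u := by
      rw [sub_smul, one_smul]
    rwa [heq] at h
  have hPvol : volume P = ENNReal.ofReal a * volume R := by
    rw [volume_hom_image, abs_of_pos (by norm_num : (0:ℝ) < (8:ℝ)⁻¹), ← ha]
  have hPfar : ∀ w ∈ P, w ∉ Metric.ball (0:V) M := by
    rintro w ⟨u, hu, rfl⟩
    dsimp only
    set w' : V := (p - (8:ℝ)⁻¹ • p) + (8:ℝ)⁻¹ • u with hw'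
    have hux : ‖u - x‖ ≤ d := by
      rw [← dist_eq_norm]; exact Metric.dist_le_diam_of_mem hRb hu hxR
    have hdec : w' - x = ((1:ℝ) - (8:ℝ)⁻¹) • (p - x) + (8:ℝ)⁻¹ • (u - x) := by
      simp only [hw', sub_smul, one_smul, smul_sub]
      abel
    have hnorm : (1 - (8:ℝ)⁻¹) * ‖p - x‖ - (8:ℝ)⁻¹ * ‖u - x‖ ≤ ‖w' - x‖ := by
      have h1 : ‖((1:ℝ) - (8:ℝ)⁻¹) • (p - x)‖ - ‖-((8:ℝ)⁻¹ • (u - x))‖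
          ≤ ‖((1:ℝ) - (8:ℝ)⁻¹) • (p - x) - -((8:ℝ)⁻¹ • (u - x))‖ :=
        norm_sub_norm_le _ _
      rw [sub_neg_eq_add, ← hdec, norm_neg, norm_smul, norm_smul] at h1
      simpa [Real.norm_eq_abs, abs_of_nonneg, show (0:ℝ) ≤ 1 - (8:ℝ)⁻¹ by norm_num] using h1
    have hpx' : ‖p - x‖ = dist p x := (dist_eq_norm p x).symm
    have hfar1 : 3/32 * d ≤ ‖w' - x‖ := by
      rw [hpx'] at hnorm
      linarith [hpx, hux, hnorm]
    have hKd : K ≤ 3/32 * d := by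
      calc K ≤ 3/32 * (r₀ / t₀) := hKt
        _ ≤ 3/32 * d := by linarith [hd0]
    have hwnorm : M + 1 ≤ ‖w'‖ := by
      have h2 : ‖w' - x‖ - ‖x‖ ≤ ‖w'‖ := by
        have := norm_sub_norm_le w' x
        have h3 : ‖w'‖ - ‖x‖ ≤ ‖w' - x‖ := by
          have := norm_sub_norm_le w' x; linarith [this]
        -- direct: ‖w' - x‖ ≤ ‖w'‖ + ‖x‖
        have h4 : ‖w' - x‖ ≤ ‖w'‖ + ‖x‖ := norm_sub_le _ _
        linarith
      have : K ≤ ‖w' - x‖ := le_trans hKd hfar1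
      simp only [hK] at this
      linarith
    intro hball
    rw [Metric.mem_ball, dist_zero_right] at hball
    linarith
  -- lower bound for the tail mass in R
  set F : Set V := E \ Metric.ball (0:V) M with hFdef
  have hFmeas : MeasurableSet F := hE.diff measurableSet_ball
  have hPle : volume P ≤ volume (F ∩ R) + volume (R \ E) := by
    refine le_trans (measure_mono ?_) (measure_union_le _ _)
    intro w hw
    by_cases hwE : w ∈ E
    · exact Or.inl ⟨⟨hwE, hPfar w hw⟩, hPsub hw⟩
    · exact Or.inr ⟨hPsub hw, hwE⟩
  have hFvol : ENNReal.ofReal (a/2) * volume R ≤ volume (F ∩ R) := by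
    have h4 : ENNReal.ofReal (a/2) * volume R + ENNReal.ofReal (a/2) * volume R
        ≤ volume (F ∩ R) + ENNReal.ofReal (a/2) * volume R := by
      calc ENNReal.ofReal (a/2) * volume R + ENNReal.ofReal (a/2) * volume R
          = ENNReal.ofReal a * volume R := by
            rw [← add_mul, ← ENNReal.ofReal_add (by positivity) (by positivity)]
            norm_num
        _ = volume P := hPvol.symm
        _ ≤ volume (F ∩ R) + volume (R \ E) := hPle
        _ ≤ volume (F ∩ R) + ENNReal.ofReal (a/2) * volume R := by
            refine add_le_add_right (le_trans hVB ?_) _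
            exact mul_le_mul_left (ENNReal.ofReal_le_ofReal hηa) _
    exact (ENNReal.add_le_add_iff_right
      (ENNReal.mul_ne_top ENNReal.ofReal_ne_top hVt)).1 h4
  have havgF : ENNReal.ofReal (a/2) ≤ (∫⁻ y in R, F.indicator 1 y) / volume R := by
    rw [lint_ind hFmeas]
    rw [ENNReal.le_div_iff_mul_le (Or.inl hV0) (Or.inl hVt)]
    exact hFvol
  calc ENNReal.ofReal ((8:ℝ)⁻¹ ^ n / 4) < ENNReal.ofReal (a/2) := by
        rw [ENNReal.ofReal_lt_ofReal_iff (by positivity)]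
        rw [← ha]
        linarith
    _ ≤ (∫⁻ y in R, F.indicator 1 y) / volume R := havgF
    _ ≤ MB B (F.indicator 1) x := le_MB hRB hxR

/-- every point of `E` is a.e. a point where the maximal function equals 1. -/
lemma ae_eq_one (hdens : IsDensityBasis B) {E : Set V} (hE : MeasurableSet E) :
    ∀ᵐ x : V ∂volume, x ∈ E → MB B (E.indicator 1) x = 1 := by
  have hall : ∀ᵐ x : V ∂volume, ∀ m : ℕ,
      ∀ R : ℕ → Set V, (∀ k, R k ∈ B) → (∀ k, x ∈ R k) →
        Tendsto (fun k => Metric.diam (R k)) atTop (nhds 0) →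
        Tendsto (fun k => (∫⁻ y in R k, (E ∩ Metric.ball 0 m).indicator 1 y) / volume (R k))
          atTop (nhds ((E ∩ Metric.ball 0 m).indicator (1 : V → ℝ≥0∞) x)) := by
    rw [ae_all_iff]
    intro m
    exact hdens.2 (E ∩ Metric.ball 0 m) (hE.inter measurableSet_ball)
      (lt_of_le_of_lt (measure_mono Set.inter_subset_right) measure_ball_lt_top)
  filter_upwards [hall] with x hx hxE
  obtain ⟨m, hm⟩ := exists_nat_gt ‖x‖
  have hxb : x ∈ Metric.ball (0:V) m := by
    rw [Metric.mem_ball, dist_zero_right]; exact hm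
  choose Rk hRkB hxRk hRkd using fun k : ℕ => hdens.1 x (1/(k+1)) (by positivity)
  have hdiam : Tendsto (fun k => Metric.diam (Rk k)) atTop (nhds 0) :=
    squeeze_zero (fun k => Metric.diam_nonneg) (fun k => (hRkd k).le)
      tendsto_one_div_add_atTop_nhds_zero_nat
  have ht := hx m Rk hRkB hxRk hdiam
  rw [Set.indicator_of_mem (Set.mem_inter hxE hxb)] at ht
  have hle : ∀ k, (∫⁻ y in Rk k, (E ∩ Metric.ball 0 m).indicator 1 y) / volume (Rk k)
      ≤ MB B (E.indicator 1) x := by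
    intro k
    refine le_trans ?_ (le_MB (hRkB k) (hxRk k))
    refine ENNReal.div_le_div_right (lintegral_mono fun y => ?_) _
    exact Set.indicator_le_indicator_of_subset Set.inter_subset_left (fun _ => zero_le) y
  have h1 : (1 : V → ℝ≥0∞) x ≤ MB B (E.indicator 1) x :=
    le_of_tendsto ht (Filter.Eventually.of_forall hle)
  simp only [Pi.one_apply] at h1
  exact le_antisymm (MB_le_one x) h1

end MaximalLevelOneAux

open MaximalLevelOneAux in
theorem maximal_level_one_set (n : ℕ) (B : Set (Set (EuclideanSpace ℝ (Fin n))))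
    (hB : ∀ R ∈ B, IsOpen R ∧ Bornology.IsBounded R ∧ Convex ℝ R)
    (hhom : ∀ R ∈ B, ∀ (a : EuclideanSpace ℝ (Fin n)) (t : ℝ), 0 < t →
      (fun x => a + t • x) '' R ∈ B)
    (hdens : IsDensityBasis B)
    (htaub : ∀ lam : ℝ, lam ∈ Set.Ioo (0 : ℝ) 1 → ∃ c : ℝ,
      ∀ E : Set (EuclideanSpace ℝ (Fin n)), MeasurableSet E → volume E < ⊤ →
        volume {x : EuclideanSpace ℝ (Fin n) |
            MB B (E.indicator 1) x > ENNReal.ofReal lam}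
          ≤ ENNReal.ofReal c * volume E)
    (E : Set (EuclideanSpace ℝ (Fin n))) (hE : MeasurableSet E) :
    volume {x : EuclideanSpace ℝ (Fin n) | MB B (E.indicator 1) x = 1}
      = volume E := by
  classical
  set S : Set (EuclideanSpace ℝ (Fin n)) := {x | MB B (E.indicator 1) x = 1} with hSdef
  -- the easy direction: `volume E ≤ volume S`
  have hge : volume E ≤ volume S := by
    have hae := ae_eq_one hdens hE
    have hnull : volume (E \ S) = 0 := by
      refine measure_mono_null ?_ (ae_iff.1 hae)
      rintro x ⟨hxE, hxS⟩
      simp only [Set.mem_setOf_eq]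
      intro h
      exact hxS (h hxE)
    calc volume E ≤ volume (E \ S) + volume (E ∩ S) := by
          refine le_trans (measure_mono ?_) (measure_union_le _ _)
          intro x hx
          by_cases h : x ∈ S
          · exact Or.inr ⟨hx, h⟩
          · exact Or.inl ⟨hx, h⟩
      _ = volume (E ∩ S) := by rw [hnull, zero_add]
      _ ≤ volume S := measure_mono Set.inter_subset_right
  rcases eq_top_or_lt_top (volume E) with htop | hfin
  · refine le_antisymm ?_ hge
    rw [htop]
    exact le_top
  -- hard direction: `volume (S \ E) = 0`
  have hW : volume (S \ E) = 0 := by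
    set a : ℝ := (8:ℝ)⁻¹ ^ n with ha
    have ha0 : 0 < a := by positivity
    have ha1 : a ≤ 1 := pow_le_one₀ (by norm_num) (by norm_num)
    have hlam : (a / 4) ∈ Set.Ioo (0:ℝ) 1 := ⟨by positivity, by nlinarith⟩
    obtain ⟨c, hc⟩ := htaub (a/4) hlam
    have hae := hdens.2 E hE hfin
    have key : ∀ m : ℕ, volume (S \ E)
        ≤ ENNReal.ofReal c * volume (E \ Metric.ball 0 (m:ℝ)) := by
      intro m
      set F : Set (EuclideanSpace ℝ (Fin n)) := E \ Metric.ball 0 (m:ℝ) with hFdef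
      have hFmeas : MeasurableSet F := hE.diff measurableSet_ball
      have hFfin : volume F < ⊤ := lt_of_le_of_lt (measure_mono Set.diff_subset) hfin
      have hsub : volume ((S \ E) \ {x | MB B (F.indicator 1) x > ENNReal.ofReal (a/4)})
          = 0 := by
        refine measure_mono_null ?_ (ae_iff.1 hae)
        rintro x ⟨⟨hxS, hxE⟩, hxH⟩
        simp only [Set.mem_setOf_eq]
        intro hprop
        -- from the density property get the small-scale bound, then apply mem_far_halo
        obtain ⟨r₀, hr₀, hP1⟩ := exists_r0 hxE hprop hdens.1
        refine hxH ?_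
        simp only [Set.mem_setOf_eq, gt_iff_lt, ← ha]
        exact mem_far_halo hB hhom hE hxE hxS hr₀ hP1 (Nat.cast_nonneg m)
      calc volume (S \ E)
          ≤ volume ((S \ E) \ {x | MB B (F.indicator 1) x > ENNReal.ofReal (a/4)})
            + volume ((S \ E) ∩ {x | MB B (F.indicator 1) x > ENNReal.ofReal (a/4)}) := by
            refine le_trans (measure_mono ?_) (measure_union_le _ _)
            intro x hx
            by_cases h : x ∈ {x | MB B (F.indicator 1) x > ENNReal.ofReal (a/4)}
            · exact Or.inr ⟨hx, h⟩
            · exact Or.inl ⟨hx, h⟩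
        _ = volume ((S \ E) ∩ {x | MB B (F.indicator 1) x > ENNReal.ofReal (a/4)}) := by
            rw [hsub, zero_add]
        _ ≤ volume {x | MB B (F.indicator 1) x > ENNReal.ofReal (a/4)} :=
            measure_mono Set.inter_subset_right
        _ ≤ ENNReal.ofReal c * volume F := hc F hFmeas hFfin
    have hFt : Tendsto (fun m : ℕ => volume (E \ Metric.ball 0 (m:ℝ))) atTop (nhds 0) := by
      have h0 : (⋂ m : ℕ, E \ Metric.ball 0 (m:ℝ)) = ∅ := by
        refine Set.eq_empty_iff_forall_notMem.2 fun z hz => ?_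
        obtain ⟨m, hm⟩ := exists_nat_gt ‖z‖
        have h1 := Set.mem_iInter.1 hz m
        rw [Set.mem_diff, Metric.mem_ball, dist_zero_right] at h1
        exact h1.2 hm
      have := tendsto_measure_iInter_atTop
        (μ := volume) (s := fun m : ℕ => E \ Metric.ball 0 (m:ℝ))
        (fun m => (hE.diff measurableSet_ball).nullMeasurableSet)
        (fun i j hij => Set.diff_subset_diff_right (Metric.ball_subset_ball (by exact_mod_cast hij)))
        ⟨0, (lt_of_le_of_lt (measure_mono Set.diff_subset) hfin).ne⟩
      rw [h0] at this
      simpa [Function.comp_def] using this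
    have hmul : Tendsto (fun m : ℕ => ENNReal.ofReal c * volume (E \ Metric.ball 0 (m:ℝ)))
        atTop (nhds (ENNReal.ofReal c * 0)) :=
      ENNReal.Tendsto.const_mul hFt (Or.inr ENNReal.ofReal_ne_top)
    rw [mul_zero] at hmul
    have hle0 : volume (S \ E) ≤ 0 := ge_of_tendsto' hmul key
    exact le_antisymm hle0 zero_le
  -- combine
  refine le_antisymm ?_ hge
  calc volume S ≤ volume (S \ E) + volume (S ∩ E) := by
        refine le_trans (measure_mono ?_) (measure_union_le _ _)
        intro x hx
        by_cases h : x ∈ E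
        · exact Or.inr ⟨hx, h⟩
        · exact Or.inl ⟨hx, h⟩
    _ = volume (S ∩ E) := by rw [hW, zero_add]
    _ ≤ volume E := measure_mono Set.inter_subset_right
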